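/- Let A : [0,1]² → ℝ be Hölder continuous and β > 0. Let λ_β > 0 and strictly positive continuous functions ψ_β, ψ̄_β on [0,1] satisfy ∫₀¹ e^{βA(x,y)} ψ_β(x) dx = λ_β ψ_β(y) and ∫₀¹ e^{βA(x,y)} ψ̄_β(y) dy = λ_β ψ̄_β(x) for all x, y. Set π_β = ∫₀¹ ψ_β ψ̄_β dx, θ_β(x) = ψ_β(x)ψ̄_β(x)/π_β, K_β(x,y) = e^{βA(x,y)} ψ̄_β(y)/(ψ̄_β(x) λ_β). Let μ_{β,A} be the unique Borel probability measure on [0,1]^ℕ whose value on every cylinder A₀×⋯×A_k×[0,1]^ℕ equals ∫_{A₀×⋯×A_k} θ_β(x₀) ∏_{i=0}^{k−1} K_β(x_i, x_{i+1}) dx_k⋯dx₀. Then μ_{β,A} is the Gibbs state for βA: for every bounded continuous g : [0,1]^ℕ → ℝ depending on finitely many coordinates, ∫ L_{Ā}(g) dμ_{β,A} = ∫ g dμ_{β,A}, where Ā(x) = βA(x₀,x₁) + log ψ_β(x₀) − log ψ_β(x₁) − log λ_β and L_{Ā} g(x) = ∫₀¹ e^{Ā(ax)} g(ax) da. -/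

import Mathlib

open MeasureTheory Filter Topology
open Fin.NatCast

noncomputable section

/-- The Bernoulli space `[0,1]^ℕ`, realized inside `ℕ → ℝ`. -/
abbrev Bi : Type := ℕ → ℝ

/-- Lebesgue measure on `[0,1]` (the a priori measure). -/
def leb01 : Measure ℝ := volume.restrict (Set.Icc 0 1)

/-- Prepending a symbol: `consR a x = ax = (a, x₀, x₁, …)`. -/
def consR (a : ℝ) (x : Bi) : Bi := fun n =>
  match n with
  | 0 => a
  | k + 1 => x k

/-- The Ruelle operator on `[0,1]^ℕ` with a priori measure Lebesgue on `[0,1]`. -/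
def RuelleI (B : Bi → ℝ) (g : Bi → ℝ) : Bi → ℝ :=
  fun x => ∫ a, Real.exp (B (consR a x)) * g (consR a x) ∂leb01

/-- The density `θ_β(x) = ψ_β(x) ψ̄_β(x) / π_β` with `π_β = ∫ ψ_β ψ̄_β`. -/
def thetaB (ψ ψb : ℝ → ℝ) : ℝ → ℝ :=
  fun x => ψ x * ψb x / ∫ t, ψ t * ψb t ∂leb01

/-- The transition kernel `K_β(x,y) = e^{βA(x,y)} ψ̄_β(y)/(ψ̄_β(x) λ_β)`. -/
def Kker (A : ℝ → ℝ → ℝ) (β lam : ℝ) (ψb : ℝ → ℝ) : ℝ → ℝ → ℝ :=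
  fun x y => Real.exp (β * A x y) * ψb y / (ψb x * lam)

/-- The normalized potential `Ā(x) = βA(x₀,x₁) + log ψ_β(x₀) − log ψ_β(x₁) − log λ_β`. -/
def AbarI (A : ℝ → ℝ → ℝ) (β lam : ℝ) (ψ : ℝ → ℝ) : Bi → ℝ :=
  fun x => β * A (x 0) (x 1) + Real.log (ψ (x 0)) - Real.log (ψ (x 1)) - Real.log lam

namespace GibbsAux

def cl (t : ℝ) : ℝ := max 0 (min 1 t)

lemma cl_mem (t : ℝ) : cl t ∈ Set.Icc (0:ℝ) 1 :=
  ⟨le_max_left _ _, max_le (by norm_num) (min_le_left _ _)⟩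

lemma cl_continuous : Continuous cl :=
  continuous_const.max (continuous_const.min continuous_id)

lemma cl_of_mem {t : ℝ} (h : t ∈ Set.Icc (0:ℝ) 1) : cl t = t := by
  rcases h with ⟨h0, h1⟩
  unfold cl
  rw [min_eq_right h1, max_eq_right h0]

instance : IsProbabilityMeasure leb01 :=
  ⟨by rw [leb01, Measure.restrict_apply_univ, Real.volume_Icc]; norm_num⟩

lemma leb01_ae_mem : ∀ᵐ t ∂leb01, t ∈ Set.Icc (0:ℝ) 1 := by
  rw [leb01]; exact ae_restrict_mem measurableSet_Icc

lemma pi_ae_mem (m : ℕ) :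
    ∀ᵐ z ∂(Measure.pi fun _ : Fin (m+1) => leb01), ∀ i, z i ∈ Set.Icc (0:ℝ) 1 := by
  rw [ae_all_iff]
  intro i
  exact Measure.tendsto_eval_ae_ae leb01_ae_mem

lemma integrable_of_bdd {X : Type*} [MeasurableSpace X] {μ : Measure X} [IsFiniteMeasure μ]
    {f : X → ℝ} (hm : AEStronglyMeasurable f μ) {C : ℝ} (h : ∀ x, |f x| ≤ C) :
    Integrable f μ :=
  Integrable.mono' (integrable_const C) hm (ae_of_all _ fun x => by
    simpa [Real.norm_eq_abs] using h x)

lemma rep_lemma (m : ℕ) (μ : Measure Bi) [IsProbabilityMeasure μ]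
    (ρ : (Fin (m+1) → ℝ) → ℝ) (hρc : Continuous ρ) (hρ0 : ∀ z, 0 ≤ ρ z)
    {Cρ : ℝ} (hρb : ∀ z, |ρ z| ≤ Cρ)
    (hcylρ : ∀ S : Fin (m+1) → Set ℝ, (∀ i, MeasurableSet (S i)) →
      μ {x : Bi | ∀ i : Fin (m+1), x (i : ℕ) ∈ S i} =
        ENNReal.ofReal (∫ y in Set.univ.pi S, ρ y ∂(Measure.pi fun _ : Fin (m+1) => leb01)))
    (f : Bi → ℝ) (F : (Fin (m+1) → ℝ) → ℝ)
    (hF : AEStronglyMeasurable F (Measure.pi fun _ : Fin (m+1) => leb01))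
    (hfF : ∀ x : Bi, f x = F (fun i => x (i : ℕ))) :
    ∫ x, f x ∂μ = ∫ z, F z * ρ z ∂(Measure.pi fun _ : Fin (m+1) => leb01) := by
  set Pi1 : Measure (Fin (m+1) → ℝ) := Measure.pi fun _ : Fin (m+1) => leb01 with hPi1
  set proj : Bi → (Fin (m+1) → ℝ) := fun x i => x (i : ℕ) with hprojdef
  have hproj : Measurable proj := measurable_pi_lambda _ fun i => measurable_pi_apply _
  set ν := μ.map proj with hν
  have hρmeas : Measurable fun z => (ρ z).toNNReal :=
    measurable_real_toNNReal.comp hρc.measurable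
  have hbox : ∀ S : Fin (m+1) → Set ℝ, (∀ i, MeasurableSet (S i)) →
      ν (Set.univ.pi S) = (Pi1.withDensity fun z => ENNReal.ofReal (ρ z)) (Set.univ.pi S) := by
    intro S hS
    have hSm : MeasurableSet (Set.univ.pi S) := MeasurableSet.univ_pi hS
    rw [hν, Measure.map_apply hproj hSm]
    have hpre : proj ⁻¹' (Set.univ.pi S) = {x : Bi | ∀ i : Fin (m+1), x (i : ℕ) ∈ S i} := by
      ext x; simp [hprojdef, Set.mem_pi]
    rw [hpre, hcylρ S hS, withDensity_apply _ hSm]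
    rw [← ofReal_integral_eq_lintegral_ofReal]
    · exact (integrable_of_bdd hρc.aestronglyMeasurable hρb).restrict
    · exact ae_of_all _ hρ0
  have hνρ : ν = Pi1.withDensity fun z => ENNReal.ofReal (ρ z) := by
    haveI : IsFiniteMeasure ν := by
      rw [hν]; exact μ.isFiniteMeasure_map proj
    refine ext_of_generate_finite _ generateFrom_pi.symm isPiSystem_pi ?_ ?_
    · rintro s ⟨S, hS, rfl⟩
      exact hbox S fun i => hS i (Set.mem_univ i)
    · have h := hbox (fun _ => Set.univ) (fun _ => MeasurableSet.univ)
      simpa [Set.pi_univ] using h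
  have hFν : AEStronglyMeasurable F ν := by
    rw [hνρ]
    exact hF.mono_ac (withDensity_absolutelyContinuous _ _)
  calc ∫ x, f x ∂μ = ∫ x, F (proj x) ∂μ :=
        integral_congr_ae (ae_of_all _ fun x => hfF x)
    _ = ∫ z, F z ∂ν := (integral_map hproj.aemeasurable hFν).symm
    _ = ∫ z, F z * ρ z ∂Pi1 := by
        rw [hνρ]
        have hd : (fun z => ENNReal.ofReal (ρ z))
            = fun z => ((fun z => (ρ z).toNNReal) z : ENNReal) := rfl
        rw [hd, integral_withDensity_eq_integral_smul hρmeas]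
        refine integral_congr_ae (ae_of_all _ fun z => ?_)
        simp [NNReal.smul_def, Real.coe_toNNReal _ (hρ0 z), mul_comm]

lemma holder_clamp_continuous (A : ℝ → ℝ → ℝ) (α HA : ℝ) (hα0 : 0 < α)
    (hA : ∀ x ∈ Set.Icc (0:ℝ) 1, ∀ y ∈ Set.Icc (0:ℝ) 1, ∀ x' ∈ Set.Icc (0:ℝ) 1,
      ∀ y' ∈ Set.Icc (0:ℝ) 1, |A x y - A x' y'| ≤ HA * (max |x - x'| |y - y'|) ^ α) :
    Continuous fun p : ℝ × ℝ => A (cl p.1) (cl p.2) := by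
  rw [continuous_iff_continuousAt]
  intro p
  rw [ContinuousAt, tendsto_iff_dist_tendsto_zero]
  have hbd : ∀ q : ℝ × ℝ, dist (A (cl q.1) (cl q.2)) (A (cl p.1) (cl p.2)) ≤
      HA * (max |cl q.1 - cl p.1| |cl q.2 - cl p.2|) ^ α := fun q => by
    rw [Real.dist_eq]
    exact hA _ (cl_mem _) _ (cl_mem _) _ (cl_mem _) _ (cl_mem _)
  refine squeeze_zero (fun q => dist_nonneg) hbd ?_
  have h1 : Tendsto (fun q : ℝ × ℝ => max |cl q.1 - cl p.1| |cl q.2 - cl p.2|) (𝓝 p) (𝓝 0) := by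
    have hc : Continuous fun q : ℝ × ℝ => max |cl q.1 - cl p.1| |cl q.2 - cl p.2| :=
      (((cl_continuous.comp continuous_fst).sub continuous_const).abs).max
        (((cl_continuous.comp continuous_snd).sub continuous_const).abs)
    have := hc.tendsto p
    simpa using this
  have h2 : Tendsto (fun t : ℝ => HA * t ^ α) (𝓝 0) (𝓝 0) := by
    have hrc : ContinuousAt (fun t : ℝ => HA * t ^ α) 0 :=
      continuousAt_const.mul (Real.continuousAt_rpow_const 0 α (Or.inr hα0.le))
    have h00 : HA * (0:ℝ) ^ α = 0 := by rw [Real.zero_rpow (ne_of_gt hα0), mul_zero]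
    simpa [ContinuousAt, h00] using hrc
  exact h2.comp h1

lemma holder_clamp_bound (A : ℝ → ℝ → ℝ) (α HA : ℝ) (hα0 : 0 < α)
    (hA : ∀ x ∈ Set.Icc (0:ℝ) 1, ∀ y ∈ Set.Icc (0:ℝ) 1, ∀ x' ∈ Set.Icc (0:ℝ) 1,
      ∀ y' ∈ Set.Icc (0:ℝ) 1, |A x y - A x' y'| ≤ HA * (max |x - x'| |y - y'|) ^ α) :
    ∀ x y : ℝ, |A (cl x) (cl y)| ≤ |HA| + |A 0 0| := by
  intro x y
  have h0 : (0:ℝ) ∈ Set.Icc (0:ℝ) 1 := by norm_num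
  have h1 : |A (cl x) (cl y) - A 0 0| ≤ HA * (max |cl x - 0| |cl y - 0|) ^ α :=
    hA _ (cl_mem _) _ (cl_mem _) _ h0 _ h0
  have hs0 : (0:ℝ) ≤ max |cl x - 0| |cl y - 0| := le_trans (abs_nonneg _) (le_max_left _ _)
  have hs1 : max |cl x - 0| |cl y - 0| ≤ 1 := by
    have hx := cl_mem x; have hy := cl_mem y
    rw [max_le_iff]
    constructor <;> rw [sub_zero, abs_of_nonneg (by first | exact hx.1 | exact hy.1)]
    · exact hx.2
    · exact hy.2
  have hsle : (max |cl x - 0| |cl y - 0|) ^ α ≤ 1 := Real.rpow_le_one hs0 hs1 (le_of_lt hα0)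
  have hsnn : (0:ℝ) ≤ (max |cl x - 0| |cl y - 0|) ^ α := Real.rpow_nonneg hs0 _
  have h2 : HA * (max |cl x - 0| |cl y - 0|) ^ α ≤ |HA| := by
    calc HA * (max |cl x - 0| |cl y - 0|) ^ α ≤ |HA| * (max |cl x - 0| |cl y - 0|) ^ α :=
          mul_le_mul_of_nonneg_right (le_abs_self _) hsnn
      _ ≤ |HA| * 1 := mul_le_mul_of_nonneg_left hsle (abs_nonneg _)
      _ = |HA| := mul_one _
  calc |A (cl x) (cl y)| ≤ |A (cl x) (cl y) - A 0 0| + |A 0 0| := by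
        linarith [abs_sub_abs_le_abs_sub (A (cl x) (cl y)) (A 0 0)]
    _ ≤ |HA| + |A 0 0| := by linarith [le_trans h1 h2]


/-! ### Clamped kernel and density -/

def Att (A : ℝ → ℝ → ℝ) : ℝ → ℝ → ℝ := fun x y => A (cl x) (cl y)

def Kc (A : ℝ → ℝ → ℝ) (β lam : ℝ) (ψb : ℝ → ℝ) : ℝ → ℝ → ℝ :=
  fun x y => Real.exp (β * Att A x y) * ψb (cl y) / (ψb (cl x) * lam)

def Tc (ψ ψb : ℝ → ℝ) (π0 : ℝ) : ℝ → ℝ := fun t => ψ (cl t) * ψb (cl t) / π0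

def Pd (A : ℝ → ℝ → ℝ) (β lam : ℝ) (ψ ψb : ℝ → ℝ) (π0 : ℝ) (m : ℕ) :
    (Fin (m+1) → ℝ) → ℝ := fun z =>
  Tc ψ ψb π0 (z 0) * ∏ i ∈ Finset.range m,
    Kc A β lam ψb (z (i : Fin (m+1))) (z ((i + 1 : ℕ) : Fin (m+1)))

def extB (m : ℕ) (z : Fin (m+1) → ℝ) : Bi := fun n => if h : n < m + 1 then z ⟨n, h⟩ else 0

lemma extB_continuous (m : ℕ) : Continuous (extB m) := by
  refine continuous_pi fun n => ?_
  by_cases h : n < m + 1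
  · simp only [extB, dif_pos h]
    exact continuous_apply _
  · simp only [extB, dif_neg h]
    exact continuous_const

lemma contComp2 {X : Type*} [TopologicalSpace X] (K : ℝ → ℝ → ℝ)
    (hK : Continuous fun p : ℝ × ℝ => K p.1 p.2) (f g : X → ℝ)
    (hf : Continuous f) (hg : Continuous g) : Continuous fun x => K (f x) (g x) :=
  hK.comp (hf.prodMk hg)

lemma contComp1 {X : Type*} [TopologicalSpace X] (K : ℝ → ℝ)
    (hK : Continuous K) (f : X → ℝ) (hf : Continuous f) :
    Continuous fun x => K (f x) :=
  hK.comp hf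

section Kernels

variable {A : ℝ → ℝ → ℝ} {β lam : ℝ} {ψ ψb : ℝ → ℝ} {π0 : ℝ}

lemma Kc_pos (hlam : 0 < lam) (hψbpos : ∀ x ∈ Set.Icc (0:ℝ) 1, 0 < ψb x) (x y : ℝ) :
    0 < Kc A β lam ψb x y :=
  div_pos (mul_pos (Real.exp_pos _) (hψbpos _ (cl_mem y)))
    (mul_pos (hψbpos _ (cl_mem x)) hlam)

lemma Tc_pos (hπ0 : 0 < π0) (hψpos : ∀ x ∈ Set.Icc (0:ℝ) 1, 0 < ψ x)
    (hψbpos : ∀ x ∈ Set.Icc (0:ℝ) 1, 0 < ψb x) (t : ℝ) : 0 < Tc ψ ψb π0 t :=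
  div_pos (mul_pos (hψpos _ (cl_mem t)) (hψbpos _ (cl_mem t))) hπ0

lemma Pd_pos (hπ0 : 0 < π0) (hlam : 0 < lam) (hψpos : ∀ x ∈ Set.Icc (0:ℝ) 1, 0 < ψ x)
    (hψbpos : ∀ x ∈ Set.Icc (0:ℝ) 1, 0 < ψb x) (m : ℕ) (z : Fin (m+1) → ℝ) :
    0 < Pd A β lam ψ ψb π0 m z :=
  mul_pos (Tc_pos hπ0 hψpos hψbpos _) (Finset.prod_pos fun i _ => Kc_pos hlam hψbpos _ _)

lemma Kc_continuous (hAtc : Continuous fun p : ℝ × ℝ => Att A p.1 p.2)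
    (hψbc : ContinuousOn ψb (Set.Icc 0 1)) (hlam : 0 < lam)
    (hψbpos : ∀ x ∈ Set.Icc (0:ℝ) 1, 0 < ψb x) :
    Continuous fun p : ℝ × ℝ => Kc A β lam ψb p.1 p.2 := by
  have hΨbc : Continuous fun t => ψb (cl t) := hψbc.comp_continuous cl_continuous cl_mem
  refine Continuous.div ?_ ?_ fun p => (mul_pos (hψbpos _ (cl_mem _)) hlam).ne'
  · exact (Real.continuous_exp.comp (continuous_const.mul hAtc)).mul
      (hΨbc.comp continuous_snd)
  · exact (hΨbc.comp continuous_fst).mul continuous_const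

lemma Tc_continuous (hψc : ContinuousOn ψ (Set.Icc 0 1))
    (hψbc : ContinuousOn ψb (Set.Icc 0 1)) : Continuous (Tc ψ ψb π0) :=
  ((hψc.comp_continuous cl_continuous cl_mem).mul
    (hψbc.comp_continuous cl_continuous cl_mem)).div_const π0

lemma Pd_continuous (hAtc : Continuous fun p : ℝ × ℝ => Att A p.1 p.2)
    (hψc : ContinuousOn ψ (Set.Icc 0 1)) (hψbc : ContinuousOn ψb (Set.Icc 0 1))
    (hlam : 0 < lam) (hψbpos : ∀ x ∈ Set.Icc (0:ℝ) 1, 0 < ψb x) (m : ℕ) :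
    Continuous (Pd A β lam ψ ψb π0 m) := by
  unfold Pd
  refine Continuous.mul ?_ ?_
  · exact contComp1 (Tc ψ ψb π0) (Tc_continuous hψc hψbc)
      (fun z : Fin (m+1) → ℝ => z (0 : Fin (m+1))) (continuous_apply _)
  · exact continuous_finset_prod _ fun i _ =>
      contComp2 (Kc A β lam ψb) (Kc_continuous hAtc hψbc hlam hψbpos)
        (fun z : Fin (m+1) → ℝ => z (i : Fin (m+1)))
        (fun z : Fin (m+1) → ℝ => z ((i + 1 : ℕ) : Fin (m+1)))
        (continuous_apply _) (continuous_apply _)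

lemma Kc_le {MA mψb Mψb : ℝ} (hβ : 0 < β) (hlam : 0 < lam)
    (hψbpos : ∀ x ∈ Set.Icc (0:ℝ) 1, 0 < ψb x)
    (hAtb : ∀ x y, |Att A x y| ≤ MA)
    (hmb : ∀ t ∈ Set.Icc (0:ℝ) 1, mψb ≤ ψb t) (hMb : ∀ t ∈ Set.Icc (0:ℝ) 1, ψb t ≤ Mψb)
    (hmbpos : 0 < mψb) (x y : ℝ) :
    Kc A β lam ψb x y ≤ Real.exp (β * MA) * Mψb / (mψb * lam) := by
  refine div_le_div₀ (le_of_lt (mul_pos (Real.exp_pos _)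
      (lt_of_lt_of_le hmbpos (le_trans (hmb _ (cl_mem 0)) (hMb _ (cl_mem 0))))))
    ?_ (mul_pos hmbpos hlam) (mul_le_mul_of_nonneg_right (hmb _ (cl_mem x)) hlam.le)
  exact mul_le_mul (Real.exp_le_exp.2 (mul_le_mul_of_nonneg_left
    (le_trans (le_abs_self _) (hAtb x y)) hβ.le)) (hMb _ (cl_mem y))
    (hψbpos _ (cl_mem y)).le (Real.exp_pos _).le

lemma Tc_le {Mψ Mψb : ℝ} (hπ0 : 0 < π0)
    (hψpos : ∀ x ∈ Set.Icc (0:ℝ) 1, 0 < ψ x) (hψbpos : ∀ x ∈ Set.Icc (0:ℝ) 1, 0 < ψb x)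
    (hM : ∀ t ∈ Set.Icc (0:ℝ) 1, ψ t ≤ Mψ) (hMb : ∀ t ∈ Set.Icc (0:ℝ) 1, ψb t ≤ Mψb)
    (t : ℝ) : Tc ψ ψb π0 t ≤ Mψ * Mψb / π0 :=
  (div_le_div_iff_of_pos_right hπ0).2 (mul_le_mul (hM _ (cl_mem t)) (hMb _ (cl_mem t))
    (hψbpos _ (cl_mem t)).le (le_trans (hψpos _ (cl_mem 0)).le (hM _ (cl_mem 0))))

lemma Pd_le {MA mψb Mψ Mψb : ℝ} (hπ0 : 0 < π0) (hβ : 0 < β) (hlam : 0 < lam)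
    (hψpos : ∀ x ∈ Set.Icc (0:ℝ) 1, 0 < ψ x) (hψbpos : ∀ x ∈ Set.Icc (0:ℝ) 1, 0 < ψb x)
    (hAtb : ∀ x y, |Att A x y| ≤ MA)
    (hM : ∀ t ∈ Set.Icc (0:ℝ) 1, ψ t ≤ Mψ)
    (hmb : ∀ t ∈ Set.Icc (0:ℝ) 1, mψb ≤ ψb t) (hMb : ∀ t ∈ Set.Icc (0:ℝ) 1, ψb t ≤ Mψb)
    (hmbpos : 0 < mψb) (m : ℕ) (z : Fin (m+1) → ℝ) :
    Pd A β lam ψ ψb π0 m z ≤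
      (Mψ * Mψb / π0) * (Real.exp (β * MA) * Mψb / (mψb * lam)) ^ m := by
  have hprodle : (∏ i ∈ Finset.range m,
      Kc A β lam ψb (z (i : Fin (m+1))) (z ((i + 1 : ℕ) : Fin (m+1))))
      ≤ (Real.exp (β * MA) * Mψb / (mψb * lam)) ^ m := by
    calc (∏ i ∈ Finset.range m,
        Kc A β lam ψb (z (i : Fin (m+1))) (z ((i + 1 : ℕ) : Fin (m+1))))
        ≤ ∏ _i ∈ Finset.range m, Real.exp (β * MA) * Mψb / (mψb * lam) :=
          Finset.prod_le_prod (fun i _ => (Kc_pos hlam hψbpos _ _).le)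
            (fun i _ => Kc_le hβ hlam hψbpos hAtb hmb hMb hmbpos _ _)
      _ = _ := by rw [Finset.prod_const, Finset.card_range]
  exact mul_le_mul (Tc_le hπ0 hψpos hψbpos hM hMb _) hprodle
    (Finset.prod_nonneg fun i _ => (Kc_pos hlam hψbpos _ _).le)
    (le_trans (Tc_pos hπ0 hψpos hψbpos 0).le (Tc_le hπ0 hψpos hψbpos hM hMb 0))

end Kernels

/-! ### The integrand of the Ruelle operator, clamped version -/

def Phi (A : ℝ → ℝ → ℝ) (β lam : ℝ) (ψ : ℝ → ℝ) (g : Bi → ℝ) (k : ℕ) :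
    (Fin (k+1) → ℝ) → ℝ → ℝ := fun z a =>
  Real.exp (β * Att A a (z 0)) * ψ (cl a) / (ψ (cl (z 0)) * lam) * g (consR a (extB k z))

lemma consR_extB_continuous (g : Bi → ℝ) (hgc : Continuous g) (k : ℕ) :
    Continuous fun p : (Fin (k+1) → ℝ) × ℝ => g (consR p.2 (extB k p.1)) := by
  refine hgc.comp (continuous_pi fun n => ?_)
  cases n with
  | zero => exact continuous_snd
  | succ n =>
    show Continuous fun p : (Fin (k+1) → ℝ) × ℝ => extB k p.1 n
    exact ((continuous_apply n).comp (extB_continuous k)).comp continuous_fst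

lemma Phi_continuous {A : ℝ → ℝ → ℝ} {β lam : ℝ} {ψ : ℝ → ℝ} {g : Bi → ℝ} {k : ℕ}
    (hAtc : Continuous fun p : ℝ × ℝ => Att A p.1 p.2)
    (hψc : ContinuousOn ψ (Set.Icc 0 1)) (hlam : 0 < lam)
    (hψpos : ∀ x ∈ Set.Icc (0:ℝ) 1, 0 < ψ x) (hgc : Continuous g) :
    Continuous fun p : (Fin (k+1) → ℝ) × ℝ => Phi A β lam ψ g k p.1 p.2 := by
  have hΨc : Continuous fun t => ψ (cl t) := hψc.comp_continuous cl_continuous cl_mem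
  have hK2 : Continuous fun p : ℝ × ℝ =>
      Real.exp (β * Att A p.2 p.1) * ψ (cl p.2) / (ψ (cl p.1) * lam) := by
    refine Continuous.div ?_ ?_ fun p => (mul_pos (hψpos _ (cl_mem _)) hlam).ne'
    · exact (Real.continuous_exp.comp (continuous_const.mul
        (hAtc.comp (continuous_snd.prodMk continuous_fst)))).mul (hΨc.comp continuous_snd)
    · exact (hΨc.comp continuous_fst).mul continuous_const
  unfold Phi
  refine Continuous.mul ?_ (consR_extB_continuous g hgc k)
  exact contComp2 (fun t a => Real.exp (β * Att A a t) * ψ (cl a) / (ψ (cl t) * lam)) hK2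
    (fun p : (Fin (k+1) → ℝ) × ℝ => p.1 0) (fun p => p.2)
    ((continuous_apply (0 : Fin (k+1))).comp continuous_fst) continuous_snd

lemma finCons_continuous (k : ℕ) :
    Continuous fun p : ℝ × (Fin (k+1) → ℝ) => (Fin.cons p.1 p.2 : Fin (k+2) → ℝ) := by
  refine continuous_pi fun i => ?_
  refine Fin.cases ?_ ?_ i
  · simpa using continuous_fst
  · intro j
    simp only [Fin.cons_succ]
    exact (continuous_apply j).comp continuous_snd

lemma key_algebra (E u v w wa lamv pi0 Pk gv : ℝ) (hv : v ≠ 0) (hwa : wa ≠ 0)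
    (hpi : pi0 ≠ 0) (hl : lamv ≠ 0) :
    E * u / (v * lamv) * gv * (v * w / pi0 * Pk)
      = gv * (u * wa / pi0 * (E * w / (wa * lamv) * Pk)) := by
  field_simp

end GibbsAux

open GibbsAux

/-- the stationary Markov measure `μ_{β,A}` given by the density `θ_β`
and the kernel `K_β` is the Gibbs state for `βA`: it is fixed by the dual of the
Ruelle operator of the normalized potential `Ā`. -/
theorem markov_measure_is_gibbs
    (A : ℝ → ℝ → ℝ) (α HA : ℝ) (hα0 : 0 < α) (hα1 : α ≤ 1)
    (hA : ∀ x ∈ Set.Icc (0:ℝ) 1, ∀ y ∈ Set.Icc (0:ℝ) 1, ∀ x' ∈ Set.Icc (0:ℝ) 1,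
      ∀ y' ∈ Set.Icc (0:ℝ) 1, |A x y - A x' y'| ≤ HA * (max |x - x'| |y - y'|) ^ α)
    (β : ℝ) (hβ : 0 < β)
    (lam : ℝ) (hlam : 0 < lam)
    (ψ ψb : ℝ → ℝ)
    (hψc : ContinuousOn ψ (Set.Icc 0 1)) (hψbc : ContinuousOn ψb (Set.Icc 0 1))
    (hψpos : ∀ x ∈ Set.Icc (0:ℝ) 1, 0 < ψ x) (hψbpos : ∀ x ∈ Set.Icc (0:ℝ) 1, 0 < ψb x)
    (heig : ∀ y ∈ Set.Icc (0:ℝ) 1, ∫ x, Real.exp (β * A x y) * ψ x ∂leb01 = lam * ψ y)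
    (heigb : ∀ x ∈ Set.Icc (0:ℝ) 1, ∫ y, Real.exp (β * A x y) * ψb y ∂leb01 = lam * ψb x)
    (μ : Measure Bi) (hμ : IsProbabilityMeasure μ)
    (hcyl : ∀ (k : ℕ) (S : Fin (k + 1) → Set ℝ), (∀ i, MeasurableSet (S i)) →
      μ {x : Bi | ∀ i : Fin (k + 1), x (i : ℕ) ∈ S i} =
        ENNReal.ofReal (∫ y in Set.univ.pi S,
          thetaB ψ ψb (y 0) * ∏ i ∈ Finset.range k,
            Kker A β lam ψb (y (i : Fin (k + 1))) (y ((i + 1 : ℕ) : Fin (k + 1)))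
          ∂(Measure.pi fun _ : Fin (k + 1) => leb01))) :
    ∀ g : Bi → ℝ, Continuous g → (∃ C, ∀ x, |g x| ≤ C) →
      (∃ k : ℕ, ∀ x y : Bi, (∀ i ≤ k, x i = y i) → g x = g y) →
      ∫ x, RuelleI (AbarI A β lam ψ) g x ∂μ = ∫ x, g x ∂μ := by
  haveI := hμ
  intro g hgc hgb hgl
  obtain ⟨C, hC⟩ := hgb
  obtain ⟨k, hk⟩ := hgl
  classical
  have hC0 : 0 ≤ C := le_trans (abs_nonneg _) (hC fun _ => 0)
  have hAtc : Continuous fun p : ℝ × ℝ => Att A p.1 p.2 :=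
    holder_clamp_continuous A α HA hα0 hA
  -- extrema of ψ, ψb on [0,1]
  obtain ⟨tM, htM, hMψ'⟩ := isCompact_Icc.exists_isMaxOn ⟨0, by norm_num⟩ hψc
  obtain ⟨tMb, htMb, hMψb'⟩ := isCompact_Icc.exists_isMaxOn ⟨0, by norm_num⟩ hψbc
  obtain ⟨tmb, htmb, hmψb'⟩ := isCompact_Icc.exists_isMinOn ⟨0, by norm_num⟩ hψbc
  obtain ⟨tm, htm, hmψ'⟩ := isCompact_Icc.exists_isMinOn ⟨0, by norm_num⟩ hψc
  have hMψ : ∀ y ∈ Set.Icc (0:ℝ) 1, ψ y ≤ ψ tM := fun y hy => hMψ' hy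
  have hMψb : ∀ y ∈ Set.Icc (0:ℝ) 1, ψb y ≤ ψb tMb := fun y hy => hMψb' hy
  have hmψb : ∀ y ∈ Set.Icc (0:ℝ) 1, ψb tmb ≤ ψb y := fun y hy => hmψb' hy
  have hmψ : ∀ y ∈ Set.Icc (0:ℝ) 1, ψ tm ≤ ψ y := fun y hy => hmψ' hy
  have hmψbpos : 0 < ψb tmb := hψbpos _ htmb
  have hAtb : ∀ x y, |Att A x y| ≤ |HA| + |A 0 0| := holder_clamp_bound A α HA hα0 hA
  -- positivity of the normalization
  set π0 : ℝ := ∫ t, ψ t * ψb t ∂leb01 with hπ0def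
  have hπ0pos : 0 < π0 := by
    have hint : IntegrableOn (fun t => ψ t * ψb t) (Set.Icc (0:ℝ) 1) volume :=
      (hψc.mul hψbc).integrableOn_compact isCompact_Icc
    have hge : ∀ t ∈ Set.Icc (0:ℝ) 1, ψ tm * ψb tmb ≤ ψ t * ψb t := fun t ht =>
      mul_le_mul (hmψ t ht) (hmψb t ht) (hψbpos _ htmb).le (hψpos t ht).le
    have h1 : (ψ tm * ψb tmb) * (volume (Set.Icc (0:ℝ) 1)).toReal
        ≤ ∫ t in Set.Icc (0:ℝ) 1, ψ t * ψb t ∂volume :=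
      by
      have h := setIntegral_ge_of_const_le measurableSet_Icc (by
        rw [Real.volume_Icc]; exact ENNReal.ofReal_ne_top) hge hint
      rw [smul_eq_mul, Measure.real_def] at h
      linarith [h]
    have hv : (volume (Set.Icc (0:ℝ) 1)).toReal = 1 := by
      rw [Real.volume_Icc]; norm_num
    have hpos : 0 < ψ tm * ψb tmb := mul_pos (hψpos _ htm) (hψbpos _ htmb)
    have hfin : 0 < ∫ t in Set.Icc (0:ℝ) 1, ψ t * ψb t ∂volume := by
      calc (0:ℝ) < (ψ tm * ψb tmb) * 1 := by linarith
        _ = (ψ tm * ψb tmb) * (volume (Set.Icc (0:ℝ) 1)).toReal := by rw [hv]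
        _ ≤ _ := h1
    simpa [hπ0def, leb01] using hfin
  -- global bounds for the densities
  have hPpos : ∀ (m : ℕ) (z : Fin (m+1) → ℝ), 0 < Pd A β lam ψ ψb π0 m z :=
    Pd_pos hπ0pos hlam hψpos hψbpos
  have hPle : ∀ (m : ℕ) (z : Fin (m+1) → ℝ), Pd A β lam ψ ψb π0 m z ≤
      (ψ tM * ψb tMb / π0) * (Real.exp (β * (|HA| + |A 0 0|)) * ψb tMb / (ψb tmb * lam)) ^ m :=
    Pd_le hπ0pos hβ hlam hψpos hψbpos hAtb hMψ hmψb hMψb hmψbpos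
  have hPb : ∀ (m : ℕ) (z : Fin (m+1) → ℝ), |Pd A β lam ψ ψb π0 m z| ≤
      (ψ tM * ψb tMb / π0) * (Real.exp (β * (|HA| + |A 0 0|)) * ψb tMb / (ψb tmb * lam)) ^ m :=
    fun m z => by rw [abs_of_pos (hPpos m z)]; exact hPle m z
  have hPc : ∀ m : ℕ, Continuous (Pd A β lam ψ ψb π0 m) :=
    fun m => Pd_continuous hAtc hψc hψbc hlam hψbpos m
  -- a.e. identification of the density with the unclamped one
  have hae : ∀ m : ℕ, ∀ᵐ z ∂(Measure.pi fun _ : Fin (m+1) => leb01),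
      (thetaB ψ ψb (z 0) * ∏ i ∈ Finset.range m,
        Kker A β lam ψb (z (i : Fin (m+1))) (z ((i + 1 : ℕ) : Fin (m+1))))
        = Pd A β lam ψ ψb π0 m z := by
    intro m
    filter_upwards [pi_ae_mem m] with z hz
    have hcl : ∀ i : Fin (m+1), cl (z i) = z i := fun i => cl_of_mem (hz i)
    simp only [thetaB, Kker, Pd, Tc, Kc, Att, hcl, hπ0def]
  have hcylP : ∀ (m : ℕ) (S : Fin (m + 1) → Set ℝ), (∀ i, MeasurableSet (S i)) →
      μ {x : Bi | ∀ i : Fin (m + 1), x (i : ℕ) ∈ S i} =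
        ENNReal.ofReal (∫ y in Set.univ.pi S, Pd A β lam ψ ψb π0 m y
          ∂(Measure.pi fun _ : Fin (m + 1) => leb01)) := by
    intro m S hS
    rw [hcyl m S hS]
    congr 1
    exact integral_congr_ae (ae_restrict_of_ae (hae m))
  -- the two local integrands
  have hGc : Continuous fun w : Fin (k+2) → ℝ => g (extB (k+1) w) :=
    hgc.comp (extB_continuous (k+1))
  have hPhiSM : StronglyMeasurable (Function.uncurry (Phi A β lam ψ g k)) :=
    (Phi_continuous hAtc hψc hlam hψpos hgc).stronglyMeasurable
  have hHtsm : StronglyMeasurable fun z : Fin (k+1) → ℝ => ∫ a, Phi A β lam ψ g k z a ∂leb01 :=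
    hPhiSM.integral_prod_right
  have hext0 : ∀ (m : ℕ) (z : Fin (m+1) → ℝ), extB m z 0 = z 0 := by
    intro m z
    simp only [extB, dif_pos (Nat.succ_pos m)]
    congr 1
  -- RuelleI coincides a.e. with the clamped integral
  have hHHt : (fun z : Fin (k+1) → ℝ => RuelleI (AbarI A β lam ψ) g (extB k z))
      =ᵐ[Measure.pi fun _ : Fin (k+1) => leb01]
      (fun z => ∫ a, Phi A β lam ψ g k z a ∂leb01) := by
    filter_upwards [pi_ae_mem k] with z hz
    rw [RuelleI]
    refine integral_congr_ae ?_
    filter_upwards [leb01_ae_mem] with a ha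
    have h2 : consR a (extB k z) 1 = z 0 := hext0 k z
    have hexp : Real.exp (AbarI A β lam ψ (consR a (extB k z)))
        = Real.exp (β * Att A a (z 0)) * ψ (cl a) / (ψ (cl (z 0)) * lam) := by
      have h1 : consR a (extB k z) 0 = a := rfl
      rw [AbarI, h1, h2]
      rw [sub_sub, Real.exp_sub, Real.exp_add, Real.exp_add,
        Real.exp_log (hψpos a ha), Real.exp_log (hψpos _ (hz 0)), Real.exp_log hlam]
      rw [Att, cl_of_mem ha, cl_of_mem (hz 0)]
    rw [hexp, Phi]
  have hHsm : AEStronglyMeasurable (fun z : Fin (k+1) → ℝ => RuelleI (AbarI A β lam ψ) g (extB k z))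
      (Measure.pi fun _ : Fin (k+1) => leb01) :=
    hHtsm.aestronglyMeasurable.congr hHHt.symm
  -- locality identities
  have hfH : ∀ x : Bi, RuelleI (AbarI A β lam ψ) g x
      = RuelleI (AbarI A β lam ψ) g (extB k (fun i : Fin (k+1) => x (i : ℕ))) := by
    intro x
    rw [RuelleI, RuelleI]
    refine integral_congr_ae (ae_of_all _ fun a => ?_)
    dsimp only
    have hcoord : ∀ n ≤ k, consR a x n
        = consR a (extB k (fun i : Fin (k+1) => x (i : ℕ))) n := by
      intro n hn
      cases n with
      | zero => rfl
      | succ n =>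
        show x n = extB k (fun i : Fin (k+1) => x (i : ℕ)) n
        have hlt : n < k + 1 := Nat.lt_succ_of_lt (Nat.lt_of_succ_le hn)
        simp only [extB, dif_pos hlt]
    have hg : g (consR a x) = g (consR a (extB k (fun i : Fin (k+1) => x (i : ℕ)))) :=
      hk _ _ hcoord
    have h0 : consR a (extB k (fun i : Fin (k+1) => x (i : ℕ))) 0 = consR a x 0 := rfl
    have h1 : consR a (extB k (fun i : Fin (k+1) => x (i : ℕ))) 1 = consR a x 1 := by
      show extB k (fun i : Fin (k+1) => x (i : ℕ)) 0 = x 0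
      rw [hext0 k]
      simp
    rw [hg, AbarI, AbarI, h0, h1]
  have hfG : ∀ x : Bi, g x = g (extB (k+1) (fun i : Fin (k+2) => x (i : ℕ))) := by
    intro x
    refine hk _ _ fun n hn => ?_
    have hlt : n < k + 2 := Nat.lt_succ_of_le (Nat.le_succ_of_le hn)
    simp only [extB, dif_pos hlt]
  -- apply the representation lemma on both sides
  have hL : ∫ x, RuelleI (AbarI A β lam ψ) g x ∂μ
      = ∫ z, RuelleI (AbarI A β lam ψ) g (extB k z) * Pd A β lam ψ ψb π0 k z
          ∂(Measure.pi fun _ : Fin (k+1) => leb01) :=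
    rep_lemma k μ (Pd A β lam ψ ψb π0 k) (hPc k) (fun z => (hPpos k z).le) (hPb k) (hcylP k)
      _ (fun z => RuelleI (AbarI A β lam ψ) g (extB k z)) hHsm hfH
  have hR : ∫ x, g x ∂μ
      = ∫ w, g (extB (k+1) w) * Pd A β lam ψ ψb π0 (k+1) w
          ∂(Measure.pi fun _ : Fin (k+2) => leb01) :=
    rep_lemma (k+1) μ (Pd A β lam ψ ψb π0 (k+1)) (hPc (k+1)) (fun z => (hPpos (k+1) z).le)
      (hPb (k+1)) (hcylP (k+1)) _ (fun w => g (extB (k+1) w)) hGc.aestronglyMeasurable hfG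
  rw [hL, hR]
  -- cast helpers
  have hcast1 : ∀ (a : ℝ) (z : Fin (k+1) → ℝ) (j : ℕ), j < k + 1 →
      (Fin.cons a z : Fin (k+2) → ℝ) ((j + 1 : ℕ) : Fin (k+2)) = z ((j : ℕ) : Fin (k+1)) := by
    intro a z j hj
    have e1 : ((j + 1 : ℕ) : Fin (k+2)) = Fin.succ ((j : ℕ) : Fin (k+1)) := by
      apply Fin.ext
      rw [Fin.val_natCast, Fin.val_succ, Fin.val_natCast,
        Nat.mod_eq_of_lt hj, Nat.mod_eq_of_lt (Nat.succ_lt_succ hj)]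
    rw [e1, Fin.cons_succ]
  have hcast0 : ∀ (a : ℝ) (z : Fin (k+1) → ℝ),
      (Fin.cons a z : Fin (k+2) → ℝ) ((0 : ℕ) : Fin (k+2)) = a := by
    intro a z
    rw [Nat.cast_zero, Fin.cons_zero]
  -- product splitting
  have hprodsplit : ∀ (a : ℝ) (z : Fin (k+1) → ℝ),
      (∏ i ∈ Finset.range (k+1),
        Kc A β lam ψb ((Fin.cons a z : Fin (k+2) → ℝ) (i : Fin (k+2)))
           ((Fin.cons a z : Fin (k+2) → ℝ) ((i + 1 : ℕ) : Fin (k+2))))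
      = Kc A β lam ψb a (z 0) * ∏ i ∈ Finset.range k,
          Kc A β lam ψb (z (i : Fin (k+1))) (z ((i + 1 : ℕ) : Fin (k+1))) := by
    intro a z
    rw [Finset.prod_range_succ']
    rw [mul_comm (Kc A β lam ψb a (z 0))]
    refine congrArg₂ (· * ·) (Finset.prod_congr rfl fun i hi => ?_) ?_
    · have hik : i < k := Finset.mem_range.1 hi
      rw [hcast1 a z i (Nat.lt_succ_of_lt hik), hcast1 a z (i+1) (Nat.succ_lt_succ hik)]
    · rw [hcast0, hcast1 a z 0 (Nat.succ_pos k), Nat.cast_zero]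
  -- argument identity for g
  have hargeq : ∀ (a : ℝ) (z : Fin (k+1) → ℝ),
      consR a (extB k z) = extB (k+1) (Fin.cons a z) := by
    intro a z
    funext n
    cases n with
    | zero =>
      show a = extB (k+1) (Fin.cons a z) 0
      simp only [extB, dif_pos (Nat.succ_pos (k+1))]
      show a = (Fin.cons a z : Fin (k+2) → ℝ) ⟨0, Nat.succ_pos (k+1)⟩
      have h00 : (⟨0, Nat.succ_pos (k+1)⟩ : Fin (k+2)) = 0 := rfl
      rw [h00, Fin.cons_zero]
    | succ n =>
      show extB k z n = extB (k+1) (Fin.cons a z) (n+1)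
      by_cases h : n < k + 1
      · simp only [extB, dif_pos h, dif_pos (Nat.succ_lt_succ h)]
        have hsucc : (⟨n+1, Nat.succ_lt_succ h⟩ : Fin (k+2)) = Fin.succ ⟨n, h⟩ := rfl
        rw [hsucc, Fin.cons_succ]
      · simp only [extB, dif_neg h, dif_neg fun hc => h (Nat.lt_of_succ_lt_succ hc)]
  -- key pointwise algebra
  have hkey : ∀ (z : Fin (k+1) → ℝ) (a : ℝ), Phi A β lam ψ g k z a * Pd A β lam ψ ψb π0 k z
      = g (extB (k+1) (Fin.cons a z)) * Pd A β lam ψ ψb π0 (k+1) (Fin.cons a z) := by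
    intro z a
    rw [← hargeq a z]
    unfold Pd
    rw [hprodsplit a z, Fin.cons_zero]
    unfold Phi Tc Kc
    exact key_algebra _ _ _ _ _ _ _ _ _ (hψpos _ (cl_mem _)).ne' (hψbpos _ (cl_mem _)).ne'
      hπ0pos.ne' hlam.ne'
  -- bounds and integrability for the product integrand
  have hΘb : ∀ w : Fin (k+2) → ℝ, |g (extB (k+1) w) * Pd A β lam ψ ψb π0 (k+1) w|
      ≤ C * ((ψ tM * ψb tMb / π0)
        * (Real.exp (β * (|HA| + |A 0 0|)) * ψb tMb / (ψb tmb * lam)) ^ (k+1)) := by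
    intro w
    rw [abs_mul]
    exact mul_le_mul (hC _) (hPb (k+1) w) (abs_nonneg _) hC0
  have hΘc : Continuous fun w : Fin (k+2) → ℝ =>
      g (extB (k+1) w) * Pd A β lam ψ ψb π0 (k+1) w := hGc.mul (hPc (k+1))
  have hint1 : Integrable (Function.uncurry fun (z : Fin (k+1) → ℝ) (a : ℝ) =>
      g (extB (k+1) (Fin.cons a z)) * Pd A β lam ψ ψb π0 (k+1) (Fin.cons a z))
      ((Measure.pi fun _ : Fin (k+1) => leb01).prod leb01) := by
    refine integrable_of_bdd ?_ (fun p => hΘb _)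
    exact (hΘc.comp ((finCons_continuous k).comp
      (continuous_snd.prodMk continuous_fst))).aestronglyMeasurable
  have hint2 : Integrable (Function.uncurry fun (a : ℝ) (z : Fin (k+1) → ℝ) =>
      g (extB (k+1) (Fin.cons a z)) * Pd A β lam ψ ψb π0 (k+1) (Fin.cons a z))
      (leb01.prod (Measure.pi fun _ : Fin (k+1) => leb01)) := by
    refine integrable_of_bdd ?_ (fun p => hΘb _)
    exact (hΘc.comp (finCons_continuous k)).aestronglyMeasurable
  -- the chain of integral identities
  calc ∫ z, RuelleI (AbarI A β lam ψ) g (extB k z) * Pd A β lam ψ ψb π0 k z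
        ∂(Measure.pi fun _ : Fin (k+1) => leb01)
      = ∫ z, (∫ a, Phi A β lam ψ g k z a ∂leb01) * Pd A β lam ψ ψb π0 k z
          ∂(Measure.pi fun _ : Fin (k+1) => leb01) := by
        refine integral_congr_ae ?_
        filter_upwards [hHHt] with z hz
        rw [hz]
    _ = ∫ z, ∫ a, g (extB (k+1) (Fin.cons a z)) * Pd A β lam ψ ψb π0 (k+1) (Fin.cons a z)
          ∂leb01 ∂(Measure.pi fun _ : Fin (k+1) => leb01) := by
        refine integral_congr_ae (ae_of_all _ fun z => ?_)
        dsimp only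
        rw [← integral_mul_const]
        exact integral_congr_ae (ae_of_all _ fun a => hkey z a)
    _ = ∫ a, ∫ z, g (extB (k+1) (Fin.cons a z)) * Pd A β lam ψ ψb π0 (k+1) (Fin.cons a z)
          ∂(Measure.pi fun _ : Fin (k+1) => leb01) ∂leb01 :=
        integral_integral_swap hint1
    _ = ∫ p : ℝ × (Fin (k+1) → ℝ),
          g (extB (k+1) (Fin.cons p.1 p.2)) * Pd A β lam ψ ψb π0 (k+1) (Fin.cons p.1 p.2)
          ∂(leb01.prod (Measure.pi fun _ : Fin (k+1) => leb01)) :=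
        integral_integral hint2
    _ = ∫ w, g (extB (k+1) w) * Pd A β lam ψ ψb π0 (k+1) w
          ∂(Measure.pi fun _ : Fin (k+2) => leb01) := by
        have hmp := measurePreserving_piFinSuccAbove (fun _ : Fin (k+2) => leb01) 0
        rw [← hmp.integral_comp' (f := MeasurableEquiv.piFinSuccAbove (fun _ : Fin (k+2) => ℝ) 0)
          (fun p : ℝ × (Fin (k+1) → ℝ) =>
            g (extB (k+1) (Fin.cons p.1 p.2)) * Pd A β lam ψ ψb π0 (k+1) (Fin.cons p.1 p.2))]
        refine integral_congr_ae (ae_of_all _ fun w => ?_)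
        simp only [MeasurableEquiv.piFinSuccAbove_apply, Fin.insertNthEquiv_zero,
          Fin.consEquiv_symm_apply, Fin.cons_self_tail]
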